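/- (Minimum distance under adaptive sampling with uniform noise; key step in the proof of Proposition 5.) Let d ≥ 1, a > 0, and let ε_1, ..., ε_n be i.i.d. random vectors, each uniformly distributed on the cube [−a, a]^d ⊆ ℝ^d. Suppose X_i = v_i + ε_i for i = 1, ..., n, where each v_i ∈ ℝ^d is a measurable function of (X_1, ..., X_{i−1}) (and possibly of auxiliary randomness independent of ε_i, ..., ε_n). Then for every r ∈ [0, a], P[ min_{1 ≤ i ≤ n} ‖X_i‖_∞ ≥ r ] ≥ (1 − (r/a)^d)^n. In particular, taking r = a n^{−1/d}, P[ min_{1 ≤ i ≤ n} ‖X_i‖_∞ ≥ a n^{−1/d} ] ≥ (1 − 1/n)^n ≥ 1/e. -/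

import Mathlib

open MeasureTheory Filter Metric

noncomputable section

/-- The local Hölder ball `C^s(Z, z₀; X; L)`: functions `g` with
`dist (g z) (g z₀) ≤ L * (dist z z₀)^s` for all `z`. -/
def LocHolderBall {Z X : Type*} [PseudoMetricSpace Z] [PseudoMetricSpace X]
    (s L : ℝ) (z0 : Z) (g : Z → X) : Prop :=
  ∀ z, dist (g z) (g z0) ≤ L * dist z z0 ^ s

/-- The global Hölder ball `C^s(Z; X; L)`. -/
def GlobHolderBall {Z X : Type*} [PseudoMetricSpace Z] [PseudoMetricSpace X]
    (s L : ℝ) (g : Z → X) : Prop :=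
  ∀ z z', dist (g z) (g z') ≤ L * dist z z' ^ s

/-- A measure `P` on a metric space has local dimension `d` around `x`:
`liminf_{r↓0} P(closedBall x r)/r^d > 0`. -/
def HasLocalDim {X : Type*} [PseudoMetricSpace X] [MeasurableSpace X]
    (P : Measure X) (x : X) (d : ℝ) : Prop :=
  0 < liminf (fun r : ℝ => (P (closedBall x r)).toReal / r ^ d) (nhdsWithin 0 (Set.Ioi 0))

/-- A random variable `V` on `(Ω, μ)` has local dimension `d` around `x`. -/
def RVHasLocalDim {Ω X : Type*} [MeasurableSpace Ω] [PseudoMetricSpace X]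
    (μ : Measure Ω) (V : Ω → X) (x : X) (d : ℝ) : Prop :=
  0 < liminf (fun r : ℝ => (μ {ω | dist (V ω) x ≤ r}).toReal / r ^ d)
      (nhdsWithin 0 (Set.Ioi 0))

/-- A probability distribution on `ℝ^d` is sub-Gaussian:
`E[exp⟨x, t⟩] ≤ exp(‖t‖₂²/2)` for all `t`. -/
def SubGaussianVec {d : ℕ} (P : Measure (Fin d → ℝ)) : Prop :=
  ∀ t : Fin d → ℝ, ∫ x, Real.exp (∑ j, x j * t j) ∂P ≤ Real.exp ((∑ j, t j ^ 2) / 2)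

/-- A probability distribution on `ℝ` is sub-Gaussian. -/
def SubGaussianReal (P : Measure ℝ) : Prop :=
  ∀ t : ℝ, ∫ x, Real.exp (x * t) ∂P ≤ Real.exp (t ^ 2 / 2)

/-- `v` is a possible value of the `k`-nearest-neighbor regressor of the data
`(X i, Y i)` at the point `x0`: there is an enumeration of the data ordered by
increasing distance of `X i` to `x0` (ties broken arbitrarily), and `v` is the
average of the responses `Y i` over the first `k` data points. -/
def IsKNNValue {ι : Type*} [Fintype ι] {dX : ℕ} (k : ℕ) (x0 : Fin dX → ℝ)
    (X : ι → Fin dX → ℝ) (Y : ι → ℝ) (v : ℝ) : Prop :=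
  ∃ e : ι ≃ Fin (Fintype.card ι),
    (∀ i j : ι, e i ≤ e j → dist (X i) x0 ≤ dist (X j) x0) ∧
    v = (k : ℝ)⁻¹ * ∑ i : ι, if ((e i : ℕ) < k) then Y i else 0

/-- The cube `[0,1]^m` with the sup metric. -/
abbrev Cube (m : ℕ) := Fin m → Set.Icc (0:ℝ) 1

/-- The standard `d`-dimensional bump function
`K_d(x) = exp(1 - 1/(1 - ‖x‖₂²)) 1{‖x‖₂ < 1}`. -/
def bumpFn (d : ℕ) (x : Fin d → ℝ) : ℝ :=
  if (∑ j, x j ^ 2) < 1 then Real.exp (1 - 1 / (1 - ∑ j, x j ^ 2)) else 0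

/-- The Hölder seminorm `‖f‖_{C^s} = sup_{z ≠ z'} dist (f z) (f z') / dist z z' ^ s`. -/
def holderSeminorm {Z X : Type*} [PseudoMetricSpace Z] [PseudoMetricSpace X]
    (s : ℝ) (f : Z → X) : ℝ :=
  ⨆ p : Z × Z, if dist p.1 p.2 = 0 then 0 else dist (f p.1) (f p.2) / dist p.1 p.2 ^ s


open scoped ENNReal NNReal

private lemma snoc_update_comm {E : Type*} {n : ℕ} (y : Fin n → E) (i : Fin n) (e c : E) :
    (Fin.snoc (Function.update y i e) c : Fin (n+1) → E) =
      Function.update (Fin.snoc y c) i.castSucc e := by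
  funext j
  refine Fin.lastCases ?_ (fun k => ?_) j
  · rw [Fin.snoc_last, Function.update_of_ne (Fin.castSucc_lt_last i).ne', Fin.snoc_last]
  · rw [Fin.snoc_castSucc]
    rcases eq_or_ne k i with rfl | hk
    · rw [Function.update_self, Function.update_self]
    · rw [Function.update_of_ne hk, Function.update_of_ne (fun h => hk (Fin.castSucc_injective n h)),
        Fin.snoc_castSucc]

private lemma update_snoc_last {E : Type*} {n : ℕ} (y : Fin n → E) (c₀ c : E) :
    Function.update (Fin.snoc y c₀ : Fin (n+1) → E) (Fin.last n) c = Fin.snoc y c := by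
  funext j
  refine Fin.lastCases ?_ (fun k => ?_) j
  · rw [Function.update_self, Fin.snoc_last]
  · rw [Function.update_of_ne (Fin.castSucc_lt_last k).ne, Fin.snoc_castSucc, Fin.snoc_castSucc]

private lemma peel {E : Type*} [MeasurableSpace E] (μ : Measure E) [IsProbabilityMeasure μ]
    (q : ℝ≥0∞) :
    ∀ (n : ℕ) (A : Fin n → (Fin n → E) → Prop),
      (∀ i, MeasurableSet {x | A i x}) →
      (∀ (i : Fin n) (x y : Fin n → E), (∀ j : Fin n, (j:ℕ) ≤ (i:ℕ) → x j = y j) → A i x → A i y) →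
      (∀ (i : Fin n) (x : Fin n → E), q ≤ μ {e | A i (Function.update x i e)}) →
      q ^ n ≤ Measure.pi (fun _ : Fin n => μ) {x | ∀ i, A i x} := by
  intro n
  induction n with
  | zero =>
      intro A _ _ _
      have h : {x : Fin 0 → E | ∀ i, A i x} = Set.univ := by
        ext x; simp
      rw [h, measure_univ, pow_zero]
  | succ n ih =>
      intro A hAm hdep hq
      have hNE : Nonempty E := by
        by_contra h
        rw [not_nonempty_iff] at h
        have h1 : μ Set.univ = 1 := measure_univ
        rw [Set.univ_eq_empty_iff.mpr h, measure_empty] at h1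
        exact zero_ne_one h1
      obtain ⟨c₀⟩ := hNE
      set πn := Measure.pi (fun _ : Fin n => μ) with hπn
      -- the predicate on prefixes
      set A' : Fin n → (Fin n → E) → Prop :=
        fun i y => A i.castSucc (Fin.snoc y c₀) with hA'
      have hsnocm : ∀ c : E, Measurable (fun y : Fin n → E => (Fin.snoc y c : Fin (n+1) → E)) := by
        intro c
        apply measurable_pi_lambda
        intro j
        refine Fin.lastCases ?_ (fun k => ?_) j
        · simp only [Fin.snoc_last]; exact measurable_const
        · simp only [Fin.snoc_castSucc]; exact measurable_pi_apply k
      have hA'm : ∀ i, MeasurableSet {y | A' i y} := fun i => (hsnocm c₀) (hAm i.castSucc)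
      have hagree : ∀ (i : Fin n) (x y : Fin n → E) (c c' : E),
          (∀ j : Fin n, (j:ℕ) ≤ (i:ℕ) → x j = y j) →
          ∀ j : Fin (n+1), (j:ℕ) ≤ ((i.castSucc : Fin (n+1)):ℕ) →
            (Fin.snoc x c : Fin (n+1) → E) j = (Fin.snoc y c' : Fin (n+1) → E) j := by
        intro i x y c c' hxy j hj
        have hj' : (j:ℕ) ≤ (i:ℕ) := by simpa using hj
        have hjn : (j:ℕ) < n := lt_of_le_of_lt hj' i.2
        have hjc : j = Fin.castSucc ⟨(j:ℕ), hjn⟩ := by ext; simp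
        rw [hjc, Fin.snoc_castSucc, Fin.snoc_castSucc]
        exact hxy ⟨(j:ℕ), hjn⟩ hj'
      have hA'dep : ∀ (i : Fin n) (x y : Fin n → E),
          (∀ j : Fin n, (j:ℕ) ≤ (i:ℕ) → x j = y j) → A' i x → A' i y := by
        intro i x y hxy hx
        exact hdep i.castSucc _ _ (hagree i x y c₀ c₀ hxy) hx
      have hA'q : ∀ (i : Fin n) (x : Fin n → E), q ≤ μ {e | A' i (Function.update x i e)} := by
        intro i x
        have hset : {e | A' i (Function.update x i e)} =
            {e | A i.castSucc (Function.update (Fin.snoc x c₀) i.castSucc e)} := by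
          ext e; simp only [hA', Set.mem_setOf_eq, snoc_update_comm]
        rw [hset]
        exact hq i.castSucc (Fin.snoc x c₀)
      have hIH := ih A' hA'm hA'dep hA'q
      -- measure-preserving splitting of the last coordinate
      have hmp := measurePreserving_piFinSuccAbove (fun _ : Fin (n+1) => μ) (Fin.last n)
      set S : Set (Fin (n+1) → E) := {x | ∀ i, A i x} with hS
      set T : Set (E × (Fin n → E)) := {p | ∀ i, A i (Fin.snoc p.2 p.1)} with hT
      have hsymm : ∀ p : E × (Fin n → E),
          (MeasurableEquiv.piFinSuccAbove (fun _ : Fin (n+1) => E) (Fin.last n)).symm p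
            = Fin.snoc p.2 p.1 := by
        intro p
        simp [MeasurableEquiv.piFinSuccAbove, Fin.snocEquiv]
      have hνS : Measure.pi (fun _ : Fin (n+1) => μ) S = (μ.prod πn) T := by
        have h1 := (hmp.symm).measure_preimage_equiv S
        have h2 : (MeasurableEquiv.piFinSuccAbove (fun _ : Fin (n+1) => E) (Fin.last n)).symm ⁻¹' S
            = T := by
          ext p
          simp only [Set.mem_preimage, hsymm, hS, hT, Set.mem_setOf_eq]
        rw [← h1, h2]
      have hTm : MeasurableSet T := by
        have hm : Measurable (fun p : E × (Fin n → E) => (Fin.snoc p.2 p.1 : Fin (n+1) → E)) := by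
          apply measurable_pi_lambda
          intro j
          refine Fin.lastCases ?_ (fun k => ?_) j
          · simp only [Fin.snoc_last]; exact measurable_fst
          · simp only [Fin.snoc_castSucc]; exact (measurable_pi_apply k).comp measurable_snd
        have h2 : T = ⋂ i, (fun p : E × (Fin n → E) => (Fin.snoc p.2 p.1 : Fin (n+1) → E)) ⁻¹'
            {x | A i x} := by
          ext p; simp [hT]
        rw [h2]
        exact MeasurableSet.iInter fun i => hm (hAm i)
      have hprod : (μ.prod πn) T = ∫⁻ y, μ ((fun c => (c, y)) ⁻¹' T) ∂πn :=
        Measure.prod_apply_symm hTm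
      set S' : Set (Fin n → E) := {y | ∀ i, A' i y} with hS'
      have hS'm : MeasurableSet S' := by
        have h2 : S' = ⋂ i, {y | A' i y} := by ext y; simp [hS']
        rw [h2]; exact MeasurableSet.iInter hA'm
      have hpt : ∀ y : Fin n → E,
          S'.indicator (fun _ => q) y ≤ μ ((fun c => (c, y)) ⁻¹' T) := by
        intro y
        by_cases hy : y ∈ S'
        · rw [Set.indicator_of_mem hy]
          have hsub : {c : E | A (Fin.last n) (Fin.snoc y c)} ⊆ (fun c => (c, y)) ⁻¹' T := by
            intro c hc
            simp only [Set.mem_preimage, hT, Set.mem_setOf_eq]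
            intro i
            refine Fin.lastCases ?_ (fun k => ?_) i
            · exact hc
            · exact hdep k.castSucc _ _ (hagree k y y c₀ c (fun j _ => rfl)) (hy k)
          have hset : {e : E | A (Fin.last n) (Function.update (Fin.snoc y c₀) (Fin.last n) e)}
              = {c : E | A (Fin.last n) (Fin.snoc y c)} := by
            ext c; rw [Set.mem_setOf_eq, Set.mem_setOf_eq, update_snoc_last]
          calc q ≤ μ {e | A (Fin.last n) (Function.update (Fin.snoc y c₀) (Fin.last n) e)} :=
                hq (Fin.last n) (Fin.snoc y c₀)
            _ = μ {c : E | A (Fin.last n) (Fin.snoc y c)} := by rw [hset]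
            _ ≤ _ := measure_mono hsub
        · rw [Set.indicator_of_notMem hy]; exact zero_le
      calc q ^ (n+1) = q ^ n * q := pow_succ q n
        _ ≤ πn S' * q := mul_le_mul_left hIH q
        _ = q * πn S' := mul_comm _ _
        _ = ∫⁻ y, S'.indicator (fun _ => q) y ∂πn := (lintegral_indicator_const hS'm q).symm
        _ ≤ ∫⁻ y, μ ((fun c => (c, y)) ⁻¹' T) ∂πn := lintegral_mono hpt
        _ = (μ.prod πn) T := hprod.symm
        _ = Measure.pi (fun _ : Fin (n+1) => μ) S := hνS.symm

/-- **Key step in the proof of Proposition 5 (minimum distance under adaptive sampling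
with uniform noise).**
If `ε₁, ..., εₙ` are i.i.d. uniform on the cube `[-a,a]^d` and `X i = v i + ε i`, where
each `v i` is a (measurable) function of the previous observations `X₁, ..., X_{i-1}` and
of auxiliary randomness `U` independent of the noise, then for every `r ∈ [0,a]`,
`P[min_i ‖X i‖_∞ ≥ r] ≥ (1 - (r/a)^d)^n`; in particular, for `r = a n^{-1/d}`,
the probability is at least `(1 - 1/n)^n`. -/
theorem adaptive_uniform_min_distance
    (d : ℕ) (hd : 0 < d) (a : ℝ) (ha : 0 < a)
    (U : Type*) [MeasurableSpace U] (PU : Measure U) [IsProbabilityMeasure PU]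
    (Pu : Measure (Fin d → ℝ)) [IsProbabilityMeasure Pu]
    (hPu : ∀ s : Set (Fin d → ℝ), MeasurableSet s →
      (Pu s).toReal =
        (volume (s ∩ Set.univ.pi fun _ : Fin d => Set.Icc (-a) a)).toReal / (2 * a) ^ d)
    (n : ℕ)
    (V : (i : Fin n) → (Fin (i : ℕ) → (Fin d → ℝ)) → U → (Fin d → ℝ))
    (hV : ∀ i : Fin n, Measurable fun p : (Fin (i : ℕ) → (Fin d → ℝ)) × U => V i p.1 p.2)
    (X : Fin n → (U × (Fin n → Fin d → ℝ)) → (Fin d → ℝ))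
    (hX : ∀ (i : Fin n) (ω : U × (Fin n → Fin d → ℝ)),
      X i ω = V i (fun j => X ⟨(j : ℕ), j.2.trans i.2⟩ ω) ω.1 + ω.2 i) :
    (∀ r : ℝ, r ∈ Set.Icc 0 a →
      (1 - (r / a) ^ d) ^ n ≤
        ((PU.prod (Measure.pi fun _ : Fin n => Pu))
          {ω | ∀ i, r ≤ ‖X i ω‖}).toReal) ∧
    (0 < n →
      (1 - 1 / (n : ℝ)) ^ n ≤
        ((PU.prod (Measure.pi fun _ : Fin n => Pu))
          {ω | ∀ i, a * (n : ℝ) ^ (-(1 : ℝ) / d) ≤ ‖X i ω‖}).toReal) := by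
  -- X i depends only on the first component and coordinates ≤ i of the second
  have hXeq : ∀ (m : ℕ) (hm : m < n) (ω ω' : U × (Fin n → Fin d → ℝ)),
      ω.1 = ω'.1 → (∀ j : Fin n, (j:ℕ) ≤ m → ω.2 j = ω'.2 j) →
      X ⟨m, hm⟩ ω = X ⟨m, hm⟩ ω' := by
    intro m
    induction m using Nat.strong_induction_on with
    | _ m ihm =>
      intro hm ω ω' h1 h2
      rw [hX ⟨m, hm⟩ ω, hX ⟨m, hm⟩ ω', h1]
      have hprev : (fun j : Fin m => X ⟨(j:ℕ), j.2.trans hm⟩ ω)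
          = fun j : Fin m => X ⟨(j:ℕ), j.2.trans hm⟩ ω' := by
        funext j
        exact ihm (j:ℕ) j.2 (j.2.trans hm) ω ω' h1 (fun j' hj' => h2 j' (hj'.trans j.2.le))
      rw [hprev, h2 ⟨m, hm⟩ le_rfl]
  -- measurability of X
  have hXm : ∀ (m : ℕ) (hm : m < n), Measurable (X ⟨m, hm⟩) := by
    intro m
    induction m using Nat.strong_induction_on with
    | _ m ihm =>
      intro hm
      have hfun : X ⟨m, hm⟩ = fun ω =>
          V ⟨m, hm⟩ (fun j : Fin m => X ⟨(j:ℕ), j.2.trans hm⟩ ω) ω.1 + ω.2 ⟨m, hm⟩ :=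
        funext (hX ⟨m, hm⟩)
      rw [hfun]
      apply Measurable.add
      · refine (hV ⟨m, hm⟩).comp (Measurable.prodMk ?_ measurable_fst)
        exact measurable_pi_lambda _ fun j : Fin m => ihm (j:ℕ) j.2 (j.2.trans hm)
      · exact (measurable_pi_apply _).comp measurable_snd
  have hXim : ∀ i : Fin n, Measurable (X i) := by
    intro i
    have := hXm (i:ℕ) i.2
    simpa using this
  -- part 1 (in ℝ form)
  have hpart1 : ∀ r : ℝ, r ∈ Set.Icc 0 a →
      (1 - (r / a) ^ d) ^ n ≤
        ((PU.prod (Measure.pi fun _ : Fin n => Pu)) {ω | ∀ i, r ≤ ‖X i ω‖}).toReal := by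
    intro r hr
    have hp0 : 0 ≤ (r / a) ^ d := pow_nonneg (div_nonneg hr.1 ha.le) d
    have hp1 : (r / a) ^ d ≤ 1 := pow_le_one₀ (div_nonneg hr.1 ha.le) ((div_le_one ha).mpr hr.2)
    -- key single-step probability bound
    have key : ∀ v : Fin d → ℝ,
        1 - ENNReal.ofReal ((r / a) ^ d) ≤ Pu {e | r ≤ ‖v + e‖} := by
      intro v
      have hcont : Continuous fun e : Fin d → ℝ => ‖v + e‖ :=
        (continuous_const.add continuous_id).norm
      have hbadm : MeasurableSet {e : Fin d → ℝ | ‖v + e‖ < r} :=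
        measurableSet_lt hcont.measurable measurable_const
      have hsub : {e : Fin d → ℝ | ‖v + e‖ < r}
          ⊆ Set.univ.pi fun j => Set.Ioo (-(v j) - r) (-(v j) + r) := by
        intro e he j _
        have h1 : |v j + e j| ≤ ‖v + e‖ := by
          have := norm_le_pi_norm (v + e) j
          simpa [Real.norm_eq_abs] using this
        have h2 : |v j + e j| < r := lt_of_le_of_lt h1 he
        rw [abs_lt] at h2
        exact ⟨by linarith [h2.1], by linarith [h2.2]⟩
      have hvol : volume ({e : Fin d → ℝ | ‖v + e‖ < r}
            ∩ Set.univ.pi fun _ : Fin d => Set.Icc (-a) a)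
          ≤ ENNReal.ofReal (2 * r) ^ d := by
        refine le_trans (measure_mono (Set.inter_subset_left.trans hsub)) ?_
        rw [volume_pi_pi]
        have hone : ∀ j : Fin d, volume (Set.Ioo (-(v j) - r) (-(v j) + r))
            = ENNReal.ofReal (2 * r) := by
          intro j; rw [Real.volume_Ioo]; congr 1; ring
        rw [Finset.prod_congr rfl fun j _ => hone j, Finset.prod_const, Finset.card_univ,
          Fintype.card_fin]
      have htoReal : (Pu {e : Fin d → ℝ | ‖v + e‖ < r}).toReal ≤ (r / a) ^ d := by
        rw [hPu _ hbadm]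
        have h1 : (volume ({e : Fin d → ℝ | ‖v + e‖ < r}
            ∩ Set.univ.pi fun _ : Fin d => Set.Icc (-a) a)).toReal ≤ (2 * r) ^ d := by
          have h2 := ENNReal.toReal_mono (ENNReal.pow_ne_top ENNReal.ofReal_ne_top) hvol
          calc (volume _).toReal ≤ (ENNReal.ofReal (2 * r) ^ d).toReal := h2
            _ = (2 * r) ^ d := by
                rw [ENNReal.toReal_pow, ENNReal.toReal_ofReal (by linarith [hr.1])]
        calc (volume ({e : Fin d → ℝ | ‖v + e‖ < r}
              ∩ Set.univ.pi fun _ : Fin d => Set.Icc (-a) a)).toReal / (2 * a) ^ d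
            ≤ (2 * r) ^ d / (2 * a) ^ d := by gcongr
          _ = (r / a) ^ d := by
              rw [← div_pow, mul_div_mul_left r a (two_ne_zero)]
      have hle : Pu {e : Fin d → ℝ | ‖v + e‖ < r} ≤ ENNReal.ofReal ((r / a) ^ d) := by
        rw [← ENNReal.ofReal_toReal (measure_ne_top Pu _)]
        exact ENNReal.ofReal_le_ofReal htoReal
      have hcompl : {e : Fin d → ℝ | r ≤ ‖v + e‖} = {e : Fin d → ℝ | ‖v + e‖ < r}ᶜ := by
        ext e; simp [not_lt]
      rw [hcompl, measure_compl hbadm (measure_ne_top Pu _), measure_univ]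
      exact tsub_le_tsub_left hle 1
    -- slice bound via peel
    have hslice : ∀ u : U, (1 - ENNReal.ofReal ((r / a) ^ d)) ^ n
        ≤ (Measure.pi fun _ : Fin n => Pu) {x | ∀ i, r ≤ ‖X i (u, x)‖} := by
      intro u
      refine peel Pu _ n (fun i x => r ≤ ‖X i (u, x)‖) ?_ ?_ ?_
      · intro i
        have hXi : Measurable fun x : Fin n → Fin d → ℝ => X i (u, x) :=
          (hXim i).comp measurable_prodMk_left
        exact measurableSet_le measurable_const hXi.norm
      · intro i x y hxy hx
        have h2 : X i (u, x) = X i (u, y) := by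
          have := hXeq (i:ℕ) i.2 (u, x) (u, y) rfl (fun j hj => hxy j hj)
          simpa using this
        show r ≤ ‖X i (u, y)‖
        rwa [← h2]
      · intro i x
        have hXe : ∀ e, X i (u, Function.update x i e)
            = V i (fun j : Fin (i:ℕ) => X ⟨(j:ℕ), j.2.trans i.2⟩ (u, x)) u + e := by
          intro e
          rw [hX i (u, Function.update x i e)]
          have h2 : (fun j : Fin (i:ℕ) => X ⟨(j:ℕ), j.2.trans i.2⟩ (u, Function.update x i e))
              = fun j : Fin (i:ℕ) => X ⟨(j:ℕ), j.2.trans i.2⟩ (u, x) := by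
            funext j
            refine hXeq (j:ℕ) (j.2.trans i.2) _ _ rfl ?_
            intro j' hj'
            show Function.update x i e j' = x j'
            refine Function.update_of_ne ?_ e x
            have : (j':ℕ) < (i:ℕ) := lt_of_le_of_lt hj' j.2
            exact Fin.ne_of_lt this
          rw [h2]
          show _ + Function.update x i e i = _ + e
          rw [Function.update_self]
        have hset : {e | r ≤ ‖X i (u, Function.update x i e)‖}
            = {e | r ≤ ‖V i (fun j : Fin (i:ℕ) => X ⟨(j:ℕ), j.2.trans i.2⟩ (u, x)) u + e‖} := by
          ext e; rw [Set.mem_setOf_eq, Set.mem_setOf_eq, hXe]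
        show 1 - ENNReal.ofReal ((r / a) ^ d) ≤ Pu {e | r ≤ ‖X i (u, Function.update x i e)‖}
        rw [hset]
        exact key _
    -- measurability of the event
    have hGm : MeasurableSet {ω : U × (Fin n → Fin d → ℝ) | ∀ i, r ≤ ‖X i ω‖} := by
      have h2 : {ω : U × (Fin n → Fin d → ℝ) | ∀ i, r ≤ ‖X i ω‖}
          = ⋂ i, {ω | r ≤ ‖X i ω‖} := by ext ω; simp
      rw [h2]
      exact MeasurableSet.iInter fun i =>
        measurableSet_le measurable_const (hXim i).norm
    have hPG : (PU.prod (Measure.pi fun _ : Fin n => Pu)) {ω | ∀ i, r ≤ ‖X i ω‖}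
        = ∫⁻ u, (Measure.pi fun _ : Fin n => Pu) {x | ∀ i, r ≤ ‖X i (u, x)‖} ∂PU := by
      rw [Measure.prod_apply hGm]
      rfl
    have hmain : (1 - ENNReal.ofReal ((r / a) ^ d)) ^ n
        ≤ (PU.prod (Measure.pi fun _ : Fin n => Pu)) {ω | ∀ i, r ≤ ‖X i ω‖} := by
      rw [hPG]
      calc (1 - ENNReal.ofReal ((r / a) ^ d)) ^ n
          = ∫⁻ _, (1 - ENNReal.ofReal ((r / a) ^ d)) ^ n ∂PU := by
            rw [lintegral_const, measure_univ, mul_one]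
        _ ≤ _ := lintegral_mono fun u => hslice u
    have hofReal : ENNReal.ofReal ((1 - (r / a) ^ d) ^ n)
        = (1 - ENNReal.ofReal ((r / a) ^ d)) ^ n := by
      rw [ENNReal.ofReal_pow (by linarith : (0:ℝ) ≤ 1 - (r / a) ^ d),
        ENNReal.ofReal_sub 1 hp0, ENNReal.ofReal_one]
    exact (ENNReal.ofReal_le_iff_le_toReal (measure_ne_top _ _)).mp (hofReal ▸ hmain)
  refine ⟨hpart1, ?_⟩
  intro hn
  have hd' : (0:ℝ) < d := by exact_mod_cast hd
  have hn1 : (1:ℝ) ≤ n := by exact_mod_cast hn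
  set r := a * (n : ℝ) ^ (-(1 : ℝ) / d) with hrdef
  have ht0 : 0 ≤ (n : ℝ) ^ (-(1 : ℝ) / d) := Real.rpow_nonneg (by positivity) _
  have ht1 : (n : ℝ) ^ (-(1 : ℝ) / d) ≤ 1 :=
    Real.rpow_le_one_of_one_le_of_nonpos hn1
      (by rw [neg_div]; exact neg_nonpos.mpr (by positivity))
  have hmem : r ∈ Set.Icc 0 a := ⟨by positivity, mul_le_of_le_one_right ha.le ht1⟩
  have h1 := hpart1 r hmem
  have hra : r / a = (n : ℝ) ^ (-(1 : ℝ) / d) := by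
    rw [hrdef, mul_comm, mul_div_assoc, div_self ha.ne', mul_one]
  have hpow : ((n : ℝ) ^ (-(1 : ℝ) / d)) ^ d = 1 / (n : ℝ) := by
    rw [← Real.rpow_natCast ((n : ℝ) ^ (-(1 : ℝ) / d)) d, ← Real.rpow_mul (by positivity)]
    have hmul : (-(1 : ℝ) / d) * d = -1 := by field_simp
    rw [hmul, Real.rpow_neg_one, one_div]
  rw [hra, hpow] at h1
  exact h1


end
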